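/- Let P be a program with deterministic small-step semantics and S a standard security context for P. Then P and S satisfy termination-insensitive trace confidentiality if and only if the Kripke interpretation of P and S satisfies termination-insensitive confidentiality, i.e., for all agents A, all worlds w, and all temporally sound formulae φ: w ⊨ ◇↓ ∧ ◇[K^C_A]φ implies w ⊨ [K^P_A](□¬↓ ∨ ◇φ). -/

import Mathlib

/-!
Security properties through the lens of modal logic: Kripke interpretations
of deterministic programs with a standard security context.

A program is given by its text, a domain of values for each variable, and a
deterministic small-step semantics, modelled as a partial function `step` on
configurations (`none` meaning that the configuration admits no further step).
Worlds of the Kripke interpretation are the finite traces from valid initial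
stores; by determinism such a trace is represented by its initial store
together with its length.
-/

attribute [local instance] Classical.propDecidable

namespace SecModal

/-- The usual box modality for a relation `R`: `φ` holds at all `R`-successors. -/
def box {W : Type} (R : W → W → Prop) (φ : W → Prop) (w : W) : Prop :=
  ∀ w', R w w' → φ w'

/-- The usual diamond modality for a relation `R`: `φ` holds at some `R`-successor. -/
def dia {W : Type} (R : W → W → Prop) (φ : W → Prop) (w : W) : Prop :=
  ∃ w', R w w' ∧ φ w'

/-- Temporal soundness of a formula `φ` with respect to a time relation `T`:
at every world, `φ` holds iff `□φ` holds. -/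
def TS {W : Type} (T : W → W → Prop) (φ : W → Prop) : Prop :=
  ∀ w, φ w ↔ box T φ w

/-- A store assigns a value to each variable. -/
abbrev Store (Var Val : Type) : Type := Var → Val

/-- A configuration pairs a program text with a store. -/
abbrev Config (Prog Var Val : Type) : Type := Prog × Store Var Val

/-- Restriction of a store to a set of variables `S` (`none` outside `S`). -/
noncomputable def restrict {Var Val : Type} (S : Set Var) (σ : Store Var Val) : Var → Option Val :=
  fun v => if v ∈ S then some (σ v) else none

/-- Destuttering: removal of consecutive duplicate entries of a list. -/
noncomputable def dest {α : Type} (l : List α) : List α :=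
  l.destutter (· ≠ ·)

/-- A program `⟨p, V, I⟩` with deterministic small-step semantics:
`text` is the program text `p`, `dom` assigns to each variable its domain of
values `I(v)`, and `step` is the deterministic small-step transition function. -/
structure Program (Prog Var Val : Type) : Type where
  text : Prog
  dom : Var → Set Val
  step : Config Prog Var Val → Option (Config Prog Var Val)

namespace Program

variable {Prog Var Val Agent : Type}

/-- `n`-fold iteration of the small-step semantics. -/
def iter (P : Program Prog Var Val) : ℕ → Config Prog Var Val → Option (Config Prog Var Val)
  | 0, c => some c
  | n + 1, c => (P.iter n c).bind P.step

/-- The configuration reached after `k` steps from `c` (defaulting to `c` when undefined). -/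
def configAt (P : Program Prog Var Val) (c : Config Prog Var Val) (k : ℕ) :
    Config Prog Var Val :=
  (P.iter k c).getD c

/-- The view, through the variables in `S`, of the trace of length `n` (i.e. with `n + 1`
configurations) starting at `c`: the destuttering of the list of restricted stores. -/
noncomputable def pview (P : Program Prog Var Val) (S : Set Var) (c : Config Prog Var Val)
    (n : ℕ) : List (Var → Option Val) :=
  dest ((List.range (n + 1)).map fun k => restrict S (P.configAt c k).2)

/-- The maximal trace generated from `c` halts. -/
def halts (P : Program Prog Var Val) (c : Config Prog Var Val) : Prop :=
  ∃ n c', P.iter n c = some c' ∧ P.step c' = none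

/-- The maximal trace generated from `c` diverges (is infinite). -/
def diverges (P : Program Prog Var Val) (c : Config Prog Var Val) : Prop :=
  ¬ P.halts c

/-- The (possibly infinite) views through `S` of the maximal traces generated from
`c₁` and `c₂` are equal: every view of a finite prefix of the one is a prefix of a view
of a finite prefix of the other, and vice versa. -/
def mviewEq (P : Program Prog Var Val) (S : Set Var) (c₁ c₂ : Config Prog Var Val) : Prop :=
  (∀ n, (P.iter n c₁).isSome = true →
    ∃ m, (P.iter m c₂).isSome = true ∧ P.pview S c₁ n <+: P.pview S c₂ m) ∧
  (∀ n, (P.iter n c₂).isSome = true →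
    ∃ m, (P.iter m c₁).isSome = true ∧ P.pview S c₂ n <+: P.pview S c₁ m)

/-- A valid initial store: every variable takes a value in its domain. -/
def ValidStore (P : Program Prog Var Val) (σ : Store Var Val) : Prop :=
  ∀ v, σ v ∈ P.dom v

/-- Worlds of the Kripke interpretation of `P`: the finite traces of `P`, represented
by a valid initial store together with a length for which the iterated step is defined
(the trace itself is recovered by determinism of the semantics). -/
structure World (P : Program Prog Var Val) : Type where
  init : Store Var Val
  valid : ∀ v, init v ∈ P.dom v
  len : ℕ
  defined : (P.iter len (P.text, init)).isSome = true

/-- The store at time `k` along the trace `w`. -/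
def World.store {P : Program Prog Var Val} (w : P.World) (k : ℕ) : Store Var Val :=
  (P.configAt (P.text, w.init) k).2

/-- The view of the world (finite trace) `w` through the set of variables `S`. -/
noncomputable def wview (P : Program Prog Var Val) (S : Set Var) (w : P.World) :
    List (Var → Option Val) :=
  P.pview S (P.text, w.init) w.len

/-- The time relation `T` of the Kripke interpretation: `w T w'` iff the trace `w`
is a (non-strict) prefix of the trace `w'`. -/
def Ttime (P : Program Prog Var Val) (w w' : P.World) : Prop :=
  w.init = w'.init ∧ w.len ≤ w'.len

/-- The knowledge relation `K^C_A = K^P_A` of an agent with read set `RA`: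
two worlds are related iff the agent's views of them coincide. -/
def Krel (P : Program Prog Var Val) (RA : Set Var) (w w' : P.World) : Prop :=
  P.wview RA w = P.wview RA w'

/-- The write-capability relation `W^C_A` of an agent with write set `WA`:
two worlds are related iff both are initial (length-1, i.e. 0 steps) traces and
their `fix`-projections (to the complement of `WA`) coincide. -/
def WCrel (P : Program Prog Var Val) (WA : Set Var) (w w' : P.World) : Prop :=
  w.len = 0 ∧ w'.len = 0 ∧ P.wview WAᶜ w = P.wview WAᶜ w'

/-- The write-permission relation `W^P_A` of an agent with write set `WA`:
two worlds are related iff their `fix`-projections coincide. -/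
def WPrel (P : Program Prog Var Val) (WA : Set Var) (w w' : P.World) : Prop :=
  P.wview WAᶜ w = P.wview WAᶜ w'

/-- The halting atom `↓`: the trace `w` has halted, i.e. its last configuration
admits no further step. -/
def halted (P : Program Prog Var Val) (w : P.World) : Prop :=
  P.step (P.configAt (P.text, w.init) w.len) = none

end Program

end SecModal

namespace SecModal

/-- Termination-insensitive trace confidentiality (Def. conf2): for all agents `A`
and all pairs of valid initial stores that agree on the `A`-readable variables,
either the views of the two generated maximal traces coincide, or at least one of
them does not halt. -/
def TITraceConf {Prog Var Val Agent : Type} (P : Program Prog Var Val)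
    (Rd : Agent → Set Var) : Prop :=
  ∀ (A : Agent) (σ1 σ2 : Store Var Val),
    P.ValidStore σ1 → P.ValidStore σ2 → (∀ v ∈ Rd A, σ1 v = σ2 v) →
    P.mviewEq (Rd A) (P.text, σ1) (P.text, σ2) ∨
      P.diverges (P.text, σ1) ∨ P.diverges (P.text, σ2)

section Aux

open List

variable {α : Type} {R : α → α → Prop} [DecidableRel R]

lemma destutter'_head : ∀ (l : List α) (a : α), ∃ t, destutter' R a l = a :: t := by
  intro l
  induction l with
  | nil => exact fun a => ⟨[], rfl⟩
  | cons b l ih =>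
    intro a
    rw [destutter'_cons]
    split
    · exact ⟨_, rfl⟩
    · exact ih a

lemma destutter'_prefix : ∀ (l t : List α) (a : α),
    destutter' R a l <+: destutter' R a (l ++ t) := by
  intro l
  induction l with
  | nil =>
    intro t a
    rw [destutter'_nil, nil_append]
    obtain ⟨t', ht'⟩ := destutter'_head (R := R) t a
    exact ⟨t', by rw [ht']; rfl⟩
  | cons b l ih =>
    intro t a
    rw [cons_append, destutter'_cons, destutter'_cons]
    split
    · obtain ⟨r, hr⟩ := ih t b
      exact ⟨r, by rw [cons_append, hr]⟩
    · exact ih t a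

lemma destutter'_append_length : ∀ (l : List α) (a x : α),
    (destutter' R a (l ++ [x])).length ≤ (destutter' R a l).length + 1 := by
  intro l
  induction l with
  | nil =>
    intro a x
    rw [nil_append, destutter'_singleton, destutter'_nil]
    split <;> simp
  | cons b l ih =>
    intro a x
    rw [cons_append, destutter'_cons, destutter'_cons]
    split
    · simpa using ih b x
    · exact ih a x

lemma nat_ivt (f : ℕ → ℕ) (hstep : ∀ k, f (k + 1) ≤ f k + 1) (L : ℕ) :
    ∀ N, f 0 ≤ L → L ≤ f N → ∃ k, k ≤ N ∧ f k = L := by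
  intro N
  induction N with
  | zero => intro h0 hN; exact ⟨0, le_rfl, Nat.le_antisymm h0 hN⟩
  | succ N ih =>
    intro h0 hN
    by_cases h : L ≤ f N
    · obtain ⟨k, hk, hfk⟩ := ih h0 h
      exact ⟨k, hk.trans (Nat.le_succ N), hfk⟩
    · refine ⟨N + 1, le_rfl, ?_⟩
      have := hstep N
      omega

end Aux

section ProgAux

namespace Program

variable {Prog Var Val : Type} (P : Program Prog Var Val)

lemma iter_zero (c : Config Prog Var Val) : P.iter 0 c = some c := rfl

lemma iter_succ (n : ℕ) (c : Config Prog Var Val) :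
    P.iter (n + 1) c = (P.iter n c).bind P.step := rfl

lemma iter_add (m n : ℕ) (c : Config Prog Var Val) :
    P.iter (m + n) c = (P.iter m c).bind (P.iter n) := by
  induction n with
  | zero =>
    cases h : P.iter m c <;> simp [h, iter_zero]
  | succ n ih =>
    rw [← Nat.add_assoc, iter_succ, ih]
    cases h : P.iter m c with
    | none => simp
    | some d => simp [iter_succ]

lemma iter_defined_of_le {m n : ℕ} {c : Config Prog Var Val} (h : m ≤ n)
    (hn : (P.iter n c).isSome = true) : (P.iter m c).isSome = true := by
  obtain ⟨k, rfl⟩ := Nat.exists_eq_add_of_le h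
  rw [iter_add] at hn
  cases h' : P.iter m c with
  | none => rw [h'] at hn; simp at hn
  | some d => rfl

lemma iter_none_of_halt {N : ℕ} {c c' : Config Prog Var Val}
    (hN : P.iter N c = some c') (hs : P.step c' = none) {m : ℕ} (hm : N < m) :
    P.iter m c = none := by
  obtain ⟨k, rfl⟩ := Nat.exists_eq_add_of_le hm
  have h1 : P.iter (N + 1) c = none := by rw [iter_succ, hN]; simpa using hs
  show P.iter (N + 1 + k) c = none
  rw [iter_add, h1]
  rfl

lemma le_of_iter_defined {N : ℕ} {c c' : Config Prog Var Val}
    (hN : P.iter N c = some c') (hs : P.step c' = none) {m : ℕ}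
    (hm : (P.iter m c).isSome = true) : m ≤ N := by
  by_contra h
  rw [P.iter_none_of_halt hN hs (by omega)] at hm
  simp at hm

lemma configAt_eq {k : ℕ} {c d : Config Prog Var Val} (h : P.iter k c = some d) :
    P.configAt c k = d := by
  simp [Program.configAt, h]

lemma pview_head (S : Set Var) (c : Config Prog Var Val) (n : ℕ) :
    ∃ t, P.pview S c n = restrict S c.2 :: t := by
  unfold Program.pview dest
  rw [List.range_succ_eq_map, List.map_cons, List.destutter_cons']
  have hc : P.configAt c 0 = c := P.configAt_eq (by rfl)
  rw [hc]
  exact destutter'_head _ _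

lemma pview_length_pos (S : Set Var) (c : Config Prog Var Val) (n : ℕ) :
    1 ≤ (P.pview S c n).length := by
  obtain ⟨t, ht⟩ := P.pview_head S c n
  rw [ht]
  simp

lemma pview_zero (S : Set Var) (c : Config Prog Var Val) :
    P.pview S c 0 = [restrict S c.2] := by
  unfold Program.pview dest
  have : List.range 1 = [0] := rfl
  rw [this, List.map_cons, List.map_nil, List.destutter_singleton]
  have hc : P.configAt c 0 = c := P.configAt_eq (by rfl)
  rw [hc]

lemma pview_mono (S : Set Var) (c : Config Prog Var Val) {n m : ℕ} (h : n ≤ m) :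
    P.pview S c n <+: P.pview S c m := by
  obtain ⟨k, rfl⟩ := Nat.exists_eq_add_of_le h
  unfold Program.pview dest
  have hr : List.range (n + k + 1) = List.range (n + 1) ++ (List.range k).map ((n + 1) + ·) := by
    rw [← List.range_add]; congr 1; omega
  rw [hr, List.map_append]
  rw [List.range_succ_eq_map, List.map_cons, List.cons_append, List.destutter_cons',
    List.destutter_cons']
  exact destutter'_prefix _ _ _

lemma pview_length_succ (S : Set Var) (c : Config Prog Var Val) (n : ℕ) :
    (P.pview S c (n + 1)).length ≤ (P.pview S c n).length + 1 := by
  unfold Program.pview dest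
  have hr : List.range (n + 1 + 1) = List.range (n + 1) ++ [n + 1] := List.range_succ (n := n + 1)
  rw [hr, List.map_append, List.range_succ_eq_map, List.map_cons, List.cons_append,
    List.destutter_cons', List.destutter_cons', List.map_singleton]
  exact destutter'_append_length _ _ _

lemma dia_halted_iff (w : P.World) :
    dia P.Ttime P.halted w ↔ P.halts (P.text, w.init) := by
  constructor
  · rintro ⟨w', ⟨hinit, _⟩, hh⟩
    obtain ⟨c', hc'⟩ := Option.isSome_iff_exists.mp w'.defined
    refine ⟨w'.len, c', by rw [hinit]; exact hc', ?_⟩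
    have hcfg := P.configAt_eq hc'
    unfold Program.halted at hh
    rw [hcfg] at hh
    exact hh
  · rintro ⟨n, c', hn, hs⟩
    have hle : w.len ≤ n := P.le_of_iter_defined hn hs w.defined
    refine ⟨⟨w.init, w.valid, n, by rw [hn]; rfl⟩, ⟨rfl, hle⟩, ?_⟩
    show P.step (P.configAt (P.text, w.init) n) = none
    rw [P.configAt_eq hn]
    exact hs

lemma agree_of_view_eq {S : Set Var} {σ1 σ2 : Store Var Val} {n m : ℕ}
    (h : P.pview S (P.text, σ1) n = P.pview S (P.text, σ2) m) :
    ∀ v ∈ S, σ1 v = σ2 v := by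
  obtain ⟨t1, h1⟩ := P.pview_head S (P.text, σ1) n
  obtain ⟨t2, h2⟩ := P.pview_head S (P.text, σ2) m
  rw [h1, h2] at h
  have hh : restrict S σ1 = restrict S σ2 := by
    simpa using congrArg (·.headI) h
  intro v hv
  have := congrFun hh v
  simpa [restrict, if_pos hv] using this

end Program

lemma restrict_eq_of_agree {Var Val : Type} {S : Set Var} {σ1 σ2 : Store Var Val}
    (h : ∀ v ∈ S, σ1 v = σ2 v) : restrict S σ1 = restrict S σ2 := by
  funext v
  unfold restrict
  split
  · rename_i hv
    rw [h v hv]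
  · rfl

end ProgAux

/-- `P` and `S` satisfy termination-insensitive trace confidentiality
iff the Kripke interpretation of `P` and `S` satisfies termination-insensitive
confidentiality: for all agents `A`, worlds `w`, and temporally sound `φ`,
`w ⊨ ◇↓ ∧ ◇[K^C_A]φ` implies `w ⊨ [K^P_A](□¬↓ ∨ ◇φ)`. -/
theorem stmt_4 {Prog Var Val Agent : Type} (P : Program Prog Var Val)
    (Rd : Agent → Set Var) :
    TITraceConf P Rd ↔
      (∀ (A : Agent) (w : P.World) (φ : P.World → Prop), TS P.Ttime φ →
        (dia P.Ttime P.halted w ∧ dia P.Ttime (box (P.Krel (Rd A)) φ) w) →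
        box (P.Krel (Rd A))
          (fun u => box P.Ttime (fun x => ¬ P.halted x) u ∨ dia P.Ttime φ u) w) := by
  constructor
  · -- trace confidentiality implies the Kripke property
    intro hconf A w φ hTS hprem u hK
    obtain ⟨hd, hb⟩ := hprem
    by_cases hu : box P.Ttime (fun x => ¬ P.halted x) u
    · exact Or.inl hu
    right
    -- both traces halt
    unfold box at hu
    push_neg at hu
    have h2 : P.halts (P.text, u.init) := (P.dia_halted_iff u).mp hu
    have h1 : P.halts (P.text, w.init) := (P.dia_halted_iff w).mp hd
    obtain ⟨N1, c1', hN1, hs1⟩ := h1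
    obtain ⟨N2, c2', hN2, hs2⟩ := h2
    have hdef1 : (P.iter N1 (P.text, w.init)).isSome = true := by rw [hN1]; rfl
    have hdef2 : (P.iter N2 (P.text, u.init)).isSome = true := by rw [hN2]; rfl
    -- the initial stores agree on the readable variables
    have hagree : ∀ v ∈ Rd A, w.init v = u.init v :=
      P.agree_of_view_eq (S := Rd A) hK
    have hmv : P.mviewEq (Rd A) (P.text, w.init) (P.text, u.init) := by
      rcases hconf A w.init u.init w.valid u.valid hagree with h | h | h
      · exact h
      · exact absurd ⟨N1, c1', hN1, hs1⟩ h
      · exact absurd ⟨N2, c2', hN2, hs2⟩ h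
    -- the full views are equal
    have h12 : P.pview (Rd A) (P.text, w.init) N1 <+: P.pview (Rd A) (P.text, u.init) N2 := by
      obtain ⟨m, hm, hpre⟩ := hmv.1 N1 hdef1
      exact hpre.trans (P.pview_mono _ _ (P.le_of_iter_defined hN2 hs2 hm))
    have h21 : P.pview (Rd A) (P.text, u.init) N2 <+: P.pview (Rd A) (P.text, w.init) N1 := by
      obtain ⟨m, hm, hpre⟩ := hmv.2 N2 hdef2
      exact hpre.trans (P.pview_mono _ _ (P.le_of_iter_defined hN1 hs1 hm))
    have hfull : P.pview (Rd A) (P.text, w.init) N1 = P.pview (Rd A) (P.text, u.init) N2 :=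
      h12.sublist.eq_of_length
        (Nat.le_antisymm h12.sublist.length_le h21.sublist.length_le)
    -- the world where boxed φ holds
    obtain ⟨w', ⟨hinit', _⟩, hbox⟩ := hb
    have hw'def : (P.iter w'.len (P.text, w.init)).isSome = true := by
      rw [hinit']; exact w'.defined
    have hw'le : w'.len ≤ N1 := P.le_of_iter_defined hN1 hs1 hw'def
    have hq : P.wview (Rd A) w' = P.pview (Rd A) (P.text, w.init) w'.len := by
      unfold Program.wview
      rw [← hinit']
    have hqpre : P.wview (Rd A) w' <+: P.pview (Rd A) (P.text, u.init) N2 := by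
      rw [hq, ← hfull]
      exact P.pview_mono _ _ hw'le
    -- find a matching prefix trace on the u-side
    obtain ⟨k, hkN2, hfk⟩ := nat_ivt (fun k => (P.pview (Rd A) (P.text, u.init) k).length)
      (fun k => P.pview_length_succ _ _ k) (P.wview (Rd A) w').length N2
      (by
        show (P.pview (Rd A) (P.text, u.init) 0).length ≤ (P.wview (Rd A) w').length
        rw [P.pview_zero, hq]
        simpa using P.pview_length_pos (Rd A) (P.text, w.init) w'.len)
      hqpre.sublist.length_le
    have hkdef : (P.iter k (P.text, u.init)).isSome = true :=
      P.iter_defined_of_le hkN2 hdef2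
    have hkview : P.pview (Rd A) (P.text, u.init) k = P.wview (Rd A) w' := by
      obtain ⟨r1, e1⟩ := P.pview_mono (Rd A) (P.text, u.init) hkN2
      obtain ⟨r2, e2⟩ := hqpre
      exact (List.append_inj (e1.trans e2.symm) hfk).1
    let u1 : P.World := ⟨u.init, u.valid, k, hkdef⟩
    have hφu1 : φ u1 := hbox u1 hkview.symm
    let umax : P.World := ⟨u.init, u.valid, N2, hdef2⟩
    have hφumax : φ umax := (hTS u1).mp hφu1 umax ⟨rfl, hkN2⟩
    exact ⟨umax, ⟨rfl, P.le_of_iter_defined hN2 hs2 u.defined⟩, hφumax⟩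
  · -- the Kripke property implies trace confidentiality
    intro h A σ1 σ2 hv1 hv2 hagree
    by_cases h1 : P.halts (P.text, σ1)
    swap
    · exact Or.inr (Or.inl h1)
    by_cases h2 : P.halts (P.text, σ2)
    swap
    · exact Or.inr (Or.inr h2)
    left
    have hrestr : restrict (Rd A) σ1 = restrict (Rd A) σ2 := restrict_eq_of_agree hagree
    have key : ∀ (τ1 τ2 : Store Var Val), P.ValidStore τ1 → P.ValidStore τ2 →
        restrict (Rd A) τ1 = restrict (Rd A) τ2 →
        P.halts (P.text, τ1) → P.halts (P.text, τ2) →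
        ∀ n, (P.iter n (P.text, τ1)).isSome = true →
          ∃ m, (P.iter m (P.text, τ2)).isSome = true ∧
            P.pview (Rd A) (P.text, τ1) n <+: P.pview (Rd A) (P.text, τ2) m := by
      intro τ1 τ2 hw1 hw2 hr hh1 hh2 n hn
      set φ : P.World → Prop :=
        fun x => P.pview (Rd A) (P.text, τ1) n <+: P.wview (Rd A) x with hφ
      have hTS : TS P.Ttime φ := by
        intro x
        constructor
        · rintro hx x' ⟨hinit, hlen⟩
          refine hx.trans ?_
          unfold Program.wview
          rw [← hinit]
          exact P.pview_mono _ _ hlen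
        · intro hbx
          exact hbx x ⟨rfl, le_rfl⟩
      let w : P.World := ⟨τ1, hw1, 0, rfl⟩
      have hd : dia P.Ttime P.halted w := (P.dia_halted_iff w).mpr hh1
      let w' : P.World := ⟨τ1, hw1, n, hn⟩
      have hb : dia P.Ttime (box (P.Krel (Rd A)) φ) w := by
        refine ⟨w', ⟨rfl, Nat.zero_le n⟩, ?_⟩
        intro x hx
        unfold Program.Krel at hx
        show P.pview (Rd A) (P.text, τ1) n <+: P.wview (Rd A) x
        rw [← hx]
        exact List.prefix_rfl
      let u0 : P.World := ⟨τ2, hw2, 0, rfl⟩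
      have hKwu0 : P.Krel (Rd A) w u0 := by
        unfold Program.Krel Program.wview
        show P.pview (Rd A) (P.text, τ1) 0 = P.pview (Rd A) (P.text, τ2) 0
        rw [P.pview_zero, P.pview_zero]
        rw [hr]
      rcases h A w φ hTS ⟨hd, hb⟩ u0 hKwu0 with hc | hc
      · exfalso
        obtain ⟨u', hT, hhalt⟩ := (P.dia_halted_iff u0).mpr hh2
        exact hc u' hT hhalt
      · obtain ⟨u', ⟨hinit, _⟩, hφu'⟩ := hc
        refine ⟨u'.len, ?_, ?_⟩
        · show (P.iter u'.len (P.text, τ2)).isSome = true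
          have : (u0 : P.World).init = τ2 := rfl
          rw [← this, hinit]
          exact u'.defined
        · have : P.wview (Rd A) u' = P.pview (Rd A) (P.text, τ2) u'.len := by
            unfold Program.wview
            have h0 : (u0 : P.World).init = τ2 := rfl
            rw [← h0, ← hinit]
          rw [hφ] at hφu'
          rw [← this]
          exact hφu'
    exact ⟨key σ1 σ2 hv1 hv2 hrestr h1 h2, key σ2 σ1 hv2 hv1 hrestr.symm h2 h1⟩

end SecModal
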